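/- arXiv:1803.11521 — 2 statements merged into one kernel-verified Lean document; each statement's English description precedes it below -/
import Mathlib

section
/- Suppose a differentiable function f : ℝ^p → ℝ satisfies the restricted strong convexity/smoothness condition with parameters 0 < m_s ≤ M_s on s-sparse differences: for all β, β′ with ‖β − β′‖₀ ≤ s, (m_s/2)‖β − β′‖² ≤ f(β) − f(β′) − ⟨∇f(β′), β − β′⟩ ≤ (M_s/2)‖β − β′‖². Then for any index set S with |S| ≤ s, any β, β′ supported in S, and any step size η ∈ (0, 2m_s/M_s²), ‖β − β′ − η∇_S f(β) + η∇_S f(β′)‖ ≤ √(1 − 2ηm_s + η²M_s²)·‖β − β′‖, and moreover √(1 − 2ηm_s + η²M_s²) < 1. -/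
open Finset

/-- ℓ₀ "norm": number of nonzero entries. -/
noncomputable def l0 {p : ℕ} (v : Fin p → ℝ) : ℕ :=
  (Finset.univ.filter fun i => v i ≠ 0).card

/-- Euclidean norm. -/
noncomputable def norm2 {p : ℕ} (v : Fin p → ℝ) : ℝ :=
  Real.sqrt (∑ i, (v i) ^ 2)

/-- Inner product. -/
noncomputable def ip {p : ℕ} (v w : Fin p → ℝ) : ℝ := ∑ i, v i * w i

/-- Gradient restricted to an index set S. -/
noncomputable def restr {p : ℕ} (S : Finset (Fin p)) (v : Fin p → ℝ) : Fin p → ℝ :=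
  fun i => if i ∈ S then v i else 0

lemma norm2_sq_eq {p : ℕ} (v : Fin p → ℝ) : (norm2 v) ^ 2 = ∑ i, (v i) ^ 2 := by
  rw [norm2, Real.sq_sqrt]
  positivity

lemma l0_le_of_subset {p s : ℕ} (S : Finset (Fin p)) (hS : S.card ≤ s)
    (x : Fin p → ℝ) (hx : ∀ i, i ∉ S → x i = 0) : l0 x ≤ s := by
  refine le_trans (Finset.card_le_card ?_) hS
  intro i hi
  simp only [Finset.mem_filter, Finset.mem_univ, true_and] at hi
  by_contra h
  exact hi (hx i h)

set_option maxHeartbeats 1000000 in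
/-- restricted-strong-convexity/smoothness contraction of the
gradient step (Lemma from Nesterov). -/
theorem rsc_rss_gradient_contraction
    (p s : ℕ) (f : (Fin p → ℝ) → ℝ) (gradf : (Fin p → ℝ) → (Fin p → ℝ))
    (hderiv : ∀ β, HasGradientAt (fun v : EuclideanSpace ℝ (Fin p) => f v)
        (WithLp.toLp 2 (gradf β)) (WithLp.toLp 2 β))
    (ms Ms : ℝ) (hms : 0 < ms) (hmM : ms ≤ Ms)
    (hrsc : ∀ β β' : Fin p → ℝ, l0 (β - β') ≤ s →
      (ms / 2) * (norm2 (β - β')) ^ 2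
          ≤ f β - f β' - ip (gradf β') (β - β') ∧
      f β - f β' - ip (gradf β') (β - β')
          ≤ (Ms / 2) * (norm2 (β - β')) ^ 2)
    (S : Finset (Fin p)) (hS : S.card ≤ s)
    (β β' : Fin p → ℝ)
    (hβ : ∀ i, i ∉ S → β i = 0) (hβ' : ∀ i, i ∉ S → β' i = 0)
    (η : ℝ) (hη0 : 0 < η) (hη1 : η < 2 * ms / Ms ^ 2) :
    norm2 (β - β' - η • restr S (gradf β) + η • restr S (gradf β'))
        ≤ Real.sqrt (1 - 2 * η * ms + η ^ 2 * Ms ^ 2) * norm2 (β - β') ∧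
      Real.sqrt (1 - 2 * η * ms + η ^ 2 * Ms ^ 2) < 1 := by
  have hMs : 0 < Ms := lt_of_lt_of_le hms hmM
  have hMsne : Ms ≠ 0 := ne_of_gt hMs
  -- expanded form of the RSC/RSS hypothesis
  have hrsc' : ∀ x y : Fin p → ℝ, (∀ i, i ∉ S → x i - y i = 0) →
      (ms / 2) * ∑ i, (x i - y i) ^ 2
          ≤ f x - f y - ∑ i, gradf y i * (x i - y i) ∧
      f x - f y - ∑ i, gradf y i * (x i - y i)
          ≤ (Ms / 2) * ∑ i, (x i - y i) ^ 2 := by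
    intro x y h
    have hl : l0 (x - y) ≤ s := l0_le_of_subset S hS _ (fun i hi => h i hi)
    have h2 := hrsc x y hl
    simpa [ip, norm2_sq_eq] using h2
  -- the restricted gradient difference
  set g : Fin p → ℝ := fun i => if i ∈ S then gradf β i - gradf β' i else 0 with hgdef
  have hg0 : ∀ i, i ∉ S → g i = 0 := by intro i hi; simp [hgdef, hi]
  have hv0 : ∀ i, i ∉ S → β i - β' i = 0 := by
    intro i hi; rw [hβ i hi, hβ' i hi]; ring
  -- key scalar quantities
  set A : ℝ := ∑ i, (β i - β' i) ^ 2 with hAdef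
  set G : ℝ := ∑ i, (g i) ^ 2 with hGdef
  set Sb : ℝ := ∑ i, gradf β i * (β i - β' i) with hSbdef
  set Sb' : ℝ := ∑ i, gradf β' i * (β i - β' i) with hSb'def
  set P : ℝ := ∑ i, gradf β i * g i with hPdef
  set Q : ℝ := ∑ i, gradf β' i * g i with hQdef
  have hA0 : 0 ≤ A := Finset.sum_nonneg fun i _ => sq_nonneg _
  have hG0 : 0 ≤ G := Finset.sum_nonneg fun i _ => sq_nonneg _
  -- P - Q = G
  have hPQ : P - Q = G := by
    rw [hPdef, hQdef, hGdef, ← Finset.sum_sub_distrib]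
    apply Finset.sum_congr rfl
    intro i _
    by_cases h : i ∈ S
    · simp only [hgdef, if_pos h]; ring
    · simp [hgdef, if_neg h]
  -- Step 1 : strong convexity lower bound on the inner product
  have h1 := (hrsc' β β' hv0).1
  have h2 := (hrsc' β' β (fun i hi => by rw [hβ i hi, hβ' i hi]; ring)).1
  have e1 : ∑ i, (β' i - β i) ^ 2 = A := by
    rw [hAdef]; apply Finset.sum_congr rfl; intro i _; ring
  have e2 : ∑ i, gradf β i * (β' i - β i) = -Sb := by
    rw [hSbdef, ← Finset.sum_neg_distrib]
    apply Finset.sum_congr rfl; intro i _; ring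
  rw [e1, e2] at h2
  have hBm : ms * A ≤ Sb - Sb' := by linarith
  -- Step 2 : restricted co-coercivity  G ≤ Ms * (Sb - Sb')
  set w : Fin p → ℝ := fun i => β i - Ms⁻¹ * g i with hwdef
  have hw0 : ∀ i, i ∉ S → w i - β' i = 0 := by
    intro i hi; simp [hwdef, hβ i hi, hβ' i hi, hg0 i hi]
  have hwβ0 : ∀ i, i ∉ S → w i - β i = 0 := by
    intro i hi; simp [hwdef, hg0 i hi]
  have hw1 := (hrsc' w β' hw0).1
  have hw2 := (hrsc' w β hwβ0).2
  have hw1' : 0 ≤ f w - f β' - ∑ i, gradf β' i * (w i - β' i) := by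
    have : 0 ≤ (ms / 2) * ∑ i, (w i - β' i) ^ 2 := by positivity
    linarith
  have ew1 : ∑ i, gradf β' i * (w i - β' i) = Sb' - Ms⁻¹ * Q := by
    rw [hSb'def, hQdef, Finset.mul_sum, ← Finset.sum_sub_distrib]
    apply Finset.sum_congr rfl; intro i _; simp only [hwdef]; ring
  have ew2 : ∑ i, gradf β i * (w i - β i) = -(Ms⁻¹ * P) := by
    rw [hPdef, Finset.mul_sum, ← Finset.sum_neg_distrib]
    apply Finset.sum_congr rfl; intro i _; simp only [hwdef]; ring
  have ew3 : ∑ i, (w i - β i) ^ 2 = Ms⁻¹ ^ 2 * G := by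
    rw [hGdef, Finset.mul_sum]
    apply Finset.sum_congr rfl; intro i _; simp only [hwdef]; ring
  rw [ew1] at hw1'
  rw [ew2, ew3] at hw2
  have hA1 : G / (2 * Ms) ≤ f β - f β' - Sb' := by
    have key : Ms⁻¹ * P - Ms⁻¹ * Q - Ms / 2 * (Ms⁻¹ ^ 2 * G) = G / (2 * Ms) := by
      rw [show Ms⁻¹ * P - Ms⁻¹ * Q = Ms⁻¹ * (P - Q) by ring, hPQ]
      field_simp
      ring
    linarith
  -- symmetric claim
  set w' : Fin p → ℝ := fun i => β' i + Ms⁻¹ * g i with hw'def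
  have hw'0 : ∀ i, i ∉ S → w' i - β i = 0 := by
    intro i hi; simp [hw'def, hβ i hi, hβ' i hi, hg0 i hi]
  have hw'β0 : ∀ i, i ∉ S → w' i - β' i = 0 := by
    intro i hi; simp [hw'def, hg0 i hi]
  have hw'1 := (hrsc' w' β hw'0).1
  have hw'2 := (hrsc' w' β' hw'β0).2
  have hw'1' : 0 ≤ f w' - f β - ∑ i, gradf β i * (w' i - β i) := by
    have : 0 ≤ (ms / 2) * ∑ i, (w' i - β i) ^ 2 := by positivity
    linarith
  have ew'1 : ∑ i, gradf β i * (w' i - β i) = -Sb + Ms⁻¹ * P := by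
    rw [hSbdef, hPdef, Finset.mul_sum, ← Finset.sum_neg_distrib, ← Finset.sum_add_distrib]
    apply Finset.sum_congr rfl; intro i _; simp only [hw'def]; ring
  have ew'2 : ∑ i, gradf β' i * (w' i - β' i) = Ms⁻¹ * Q := by
    rw [hQdef, Finset.mul_sum]
    apply Finset.sum_congr rfl; intro i _; simp only [hw'def]; ring
  have ew'3 : ∑ i, (w' i - β' i) ^ 2 = Ms⁻¹ ^ 2 * G := by
    rw [hGdef, Finset.mul_sum]
    apply Finset.sum_congr rfl; intro i _; simp only [hw'def]; ring
  rw [ew'1] at hw'1'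
  rw [ew'2, ew'3] at hw'2
  have hA2 : G / (2 * Ms) ≤ f β' - f β + Sb := by
    have key : Ms⁻¹ * P - Ms⁻¹ * Q - Ms / 2 * (Ms⁻¹ ^ 2 * G) = G / (2 * Ms) := by
      rw [show Ms⁻¹ * P - Ms⁻¹ * Q = Ms⁻¹ * (P - Q) by ring, hPQ]
      field_simp
      ring
    linarith
  have hGB : G ≤ Ms * (Sb - Sb') := by
    have h : G / Ms ≤ Sb - Sb' := by
      have : G / Ms = G / (2 * Ms) + G / (2 * Ms) := by field_simp; ring
      linarith
    calc G = (G / Ms) * Ms := by field_simp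
    _ ≤ (Sb - Sb') * Ms := by
        apply mul_le_mul_of_nonneg_right h hMs.le
    _ = Ms * (Sb - Sb') := by ring
  -- Step 3 : expand the squared norm of the iterate difference
  have hcomp : (β - β' - η • restr S (gradf β) + η • restr S (gradf β'))
      = fun i => (β i - β' i) - η * g i := by
    funext i
    simp only [Pi.add_apply, Pi.sub_apply, Pi.smul_apply, smul_eq_mul, restr, hgdef]
    by_cases h : i ∈ S
    · simp only [if_pos h]; ring
    · simp only [if_neg h]; ring
  have evg : ∑ i, (β i - β' i) * g i = Sb - Sb' := by
    rw [hSbdef, hSb'def, ← Finset.sum_sub_distrib]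
    apply Finset.sum_congr rfl
    intro i _
    by_cases h : i ∈ S
    · simp only [hgdef, if_pos h]; ring
    · rw [hgdef]; simp only [if_neg h, mul_zero, hv0 i h]; ring
  have eexp : ∑ i, ((β i - β' i) - η * g i) ^ 2
      = A - 2 * η * (Sb - Sb') + η ^ 2 * G := by
    rw [← evg, hAdef, hGdef, Finset.mul_sum, Finset.mul_sum, ← Finset.sum_sub_distrib,
      ← Finset.sum_add_distrib]
    apply Finset.sum_congr rfl; intro i _; ring
  -- arithmetic facts about η
  have hηMs2 : η * Ms ^ 2 < 2 * ms := by
    rwa [lt_div_iff₀ (by positivity)] at hη1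
  have hηMs : η * Ms < 2 := by
    have h : (η * Ms) * Ms < 2 * Ms := by
      calc (η * Ms) * Ms = η * Ms ^ 2 := by ring
      _ < 2 * ms := hηMs2
      _ ≤ 2 * Ms := by linarith
    exact lt_of_mul_lt_mul_right h hMs.le
  -- the contraction constant
  set c : ℝ := 1 - 2 * η * ms + η ^ 2 * Ms ^ 2 with hcdef
  have hc0 : 0 ≤ c := by
    have k1 : (0:ℝ) ≤ (1 - η * Ms) ^ 2 := sq_nonneg _
    have k1' : (1 - η * Ms) ^ 2 = 1 - 2 * η * Ms + η ^ 2 * Ms ^ 2 := by ring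
    have k2 : 0 ≤ 2 * η * (Ms - ms) :=
      mul_nonneg (by positivity) (sub_nonneg.mpr hmM)
    have k2' : 2 * η * (Ms - ms) = 2 * η * Ms - 2 * η * ms := by ring
    rw [hcdef]; linarith [k1, k1', k2, k2']
  have hc1 : c < 1 := by
    have h := mul_lt_mul_of_pos_left hηMs2 hη0
    have e : η * (η * Ms ^ 2) = η ^ 2 * Ms ^ 2 := by ring
    have e2 : η * (2 * ms) = 2 * η * ms := by ring
    rw [hcdef]; linarith
  -- main squared inequality
  have hmain : ∑ i, ((β i - β' i) - η * g i) ^ 2 ≤ c * A := by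
    rw [eexp]
    have t1 : η ^ 2 * G ≤ η ^ 2 * (Ms * (Sb - Sb')) :=
      mul_le_mul_of_nonneg_left hGB (sq_nonneg η)
    have t2 : (η * (2 - η * Ms)) * (ms * A) ≤ (η * (2 - η * Ms)) * (Sb - Sb') := by
      apply mul_le_mul_of_nonneg_left hBm
      have : 0 ≤ 2 - η * Ms := by linarith
      positivity
    have t3 : 0 ≤ (η ^ 2 * Ms * (Ms - ms)) * A := by
      have : 0 ≤ Ms - ms := by linarith
      positivity
    have eq1 : A - 2 * η * (Sb - Sb') + η ^ 2 * (Ms * (Sb - Sb'))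
        = A - (η * (2 - η * Ms)) * (Sb - Sb') := by ring
    have eq2 : A - (η * (2 - η * Ms)) * (ms * A)
        = (1 - 2 * η * ms + η ^ 2 * (Ms * ms)) * A := by ring
    have eq3 : c * A - (1 - 2 * η * ms + η ^ 2 * (Ms * ms)) * A
        = (η ^ 2 * Ms * (Ms - ms)) * A := by rw [hcdef]; ring
    linarith [t1, t2, t3, eq1, eq2, eq3]
  -- conclude
  constructor
  · rw [hcomp]
    unfold norm2
    have h2A : (∑ i, ((β - β') i) ^ 2) = A := by
      rw [hAdef]
      exact Finset.sum_congr rfl (fun i _ => rfl)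
    rw [h2A]
    have key : Real.sqrt (∑ i, ((β i - β' i) - η * g i) ^ 2)
        ≤ Real.sqrt c * Real.sqrt A := by
      rw [← Real.sqrt_mul hc0]
      exact Real.sqrt_le_sqrt hmain
    exact key
  · calc Real.sqrt c < Real.sqrt 1 := Real.sqrt_lt_sqrt hc0 hc1
    _ = 1 := Real.sqrt_one
end

section
/- If f is restricted strongly convex/smooth with parameters m_s, M_s at sparsity level s = k + k*, β* is k*-sparse, β^{(t)} is k-sparse with k ≥ k*, and η ∈ (0, 2m_s/M_s²), then the hard-thresholded gradient step β^{(t+1)} = Θ_k(β^{(t)} − η∇_S f(β^{(t)})) with S = supp(β^{(t)}) ∪ supp(β*) satisfies ‖β^{(t+1)} − β*‖ ≤ 1.62ρ‖β^{(t)} − β*‖ + 1.62η√s·‖∇f(β*)‖_∞, where ρ = √(1 − 2ηm_s + η²M_s²) < 1. -/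
open Finset

/-- Sup norm. -/
noncomputable def normInf {p : ℕ} (v : Fin p → ℝ) : ℝ :=
  ⨆ i, |v i|

/-- Support of a vector as a Finset. -/
noncomputable def suppF {p : ℕ} (v : Fin p → ℝ) : Finset (Fin p) :=
  Finset.univ.filter fun i => v i ≠ 0

namespace IHTAux

variable {p : ℕ}

noncomputable def e (v : Fin p → ℝ) : EuclideanSpace ℝ (Fin p) :=
  (WithLp.equiv 2 (Fin p → ℝ)).symm v

lemma e_apply (v : Fin p → ℝ) (i : Fin p) : e v i = v i := rfl

lemma e_sub (v w : Fin p → ℝ) : e (v - w) = e v - e w := rfl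

lemma e_add (v w : Fin p → ℝ) : e (v + w) = e v + e w := rfl

lemma e_smul (c : ℝ) (v : Fin p → ℝ) : e (c • v) = c • e v := rfl

lemma norm2_eq (v : Fin p → ℝ) : norm2 v = ‖e v‖ := by
  rw [EuclideanSpace.norm_eq]
  simp [norm2, e_apply, sq_abs]

lemma ip_eq (v w : Fin p → ℝ) : ip v w = inner ℝ (e v) (e w) := by
  rw [PiLp.inner_apply]
  simp [ip, e_apply, RCLike.inner_apply, mul_comm]

lemma norm2_nonneg (v : Fin p → ℝ) : 0 ≤ norm2 v := Real.sqrt_nonneg _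

lemma norm2_sq (v : Fin p → ℝ) : norm2 v ^ 2 = ∑ i, v i ^ 2 :=
  Real.sq_sqrt (Finset.sum_nonneg fun i _ => sq_nonneg _)

lemma norm2_smul (c : ℝ) (v : Fin p → ℝ) : norm2 (c • v) = |c| * norm2 v := by
  rw [norm2_eq, norm2_eq, e_smul, norm_smul, Real.norm_eq_abs]

lemma norm2_add_le (v w : Fin p → ℝ) : norm2 (v + w) ≤ norm2 v + norm2 w := by
  rw [norm2_eq, norm2_eq, norm2_eq, e_add]; exact norm_add_le _ _

lemma norm2_sub_comm (v w : Fin p → ℝ) : norm2 (v - w) = norm2 (w - v) := by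
  rw [norm2_eq, norm2_eq, e_sub, e_sub, norm_sub_rev]

lemma ip_comm (v w : Fin p → ℝ) : ip v w = ip w v := by
  simp [ip, mul_comm]

lemma ip_sub_left (v w x : Fin p → ℝ) : ip (v - w) x = ip v x - ip w x := by
  simp [ip, sub_mul, Finset.sum_sub_distrib]

lemma ip_sub_right (v w x : Fin p → ℝ) : ip v (w - x) = ip v w - ip v x := by
  simp [ip, mul_sub, Finset.sum_sub_distrib]

lemma ip_neg_right (v w : Fin p → ℝ) : ip v (-w) = -(ip v w) := by
  simp [ip]

lemma ip_smul_right (c : ℝ) (v w : Fin p → ℝ) : ip v (c • w) = c * ip v w := by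
  simp [ip, Finset.mul_sum, smul_eq_mul, mul_left_comm]

lemma abs_le_normInf (v : Fin p → ℝ) (i : Fin p) : |v i| ≤ normInf v :=
  le_ciSup (f := fun j => |v j|) (Set.Finite.bddAbove (Set.finite_range _)) i

lemma normInf_nonneg (hp : 0 < p) (v : Fin p → ℝ) : 0 ≤ normInf v :=
  le_trans (abs_nonneg _) (abs_le_normInf v ⟨0, hp⟩)

lemma norm2_restr_le (hp : 0 < p) (S : Finset (Fin p)) (v : Fin p → ℝ) :
    norm2 (restr S v) ≤ Real.sqrt (S.card) * normInf v := by
  classical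
  have h0 : 0 ≤ normInf v := normInf_nonneg hp v
  have hsum : ∑ i, (restr S v i) ^ 2 ≤ (S.card : ℝ) * normInf v ^ 2 := by
    have h1 : ∑ i, (restr S v i) ^ 2 = ∑ i ∈ S, v i ^ 2 := by
      rw [show (fun i => (restr S v i) ^ 2) = fun i => if i ∈ S then v i ^ 2 else 0 from
        funext fun i => by by_cases h : i ∈ S <;> simp [restr, h]]
      rw [Finset.sum_ite_mem, Finset.univ_inter]
    rw [h1]
    calc ∑ i ∈ S, v i ^ 2 ≤ ∑ _i ∈ S, normInf v ^ 2 := by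
          refine Finset.sum_le_sum fun i _ => ?_
          have h := abs_le_normInf v i
          calc v i ^ 2 = |v i| ^ 2 := (sq_abs _).symm
            _ ≤ normInf v ^ 2 := by nlinarith [abs_nonneg (v i)]
      _ = (S.card : ℝ) * normInf v ^ 2 := by rw [Finset.sum_const, nsmul_eq_mul]
  calc norm2 (restr S v) = Real.sqrt (∑ i, (restr S v i) ^ 2) := rfl
    _ ≤ Real.sqrt ((S.card : ℝ) * normInf v ^ 2) := Real.sqrt_le_sqrt hsum
    _ = Real.sqrt (S.card) * normInf v := by
        rw [Real.sqrt_mul (Nat.cast_nonneg _), Real.sqrt_sq h0]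

end IHTAux

open IHTAux

/-- one step of hard-thresholded gradient descent contracts
towards any k*-sparse β* (Proposition 6 of the paper).  The hard-thresholding
operator Θ and its 1.62-approximation property are assumed as hypotheses. -/
theorem iht_one_step_contraction
    (p k kstar s : ℕ) (hp : 0 < p) (hks : kstar ≤ k) (hs : s = k + kstar)
    (f : (Fin p → ℝ) → ℝ) (gradf : (Fin p → ℝ) → (Fin p → ℝ))
    (ms Ms : ℝ) (hms : 0 < ms) (hmM : ms ≤ Ms)
    (hrsc : ∀ β β' : Fin p → ℝ, l0 (β - β') ≤ s →
      (ms / 2) * (norm2 (β - β')) ^ 2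
          ≤ f β - f β' - ip (gradf β') (β - β') ∧
      f β - f β' - ip (gradf β') (β - β')
          ≤ (Ms / 2) * (norm2 (β - β')) ^ 2)
    (η : ℝ) (hη0 : 0 < η) (hη1 : η < 2 * ms / Ms ^ 2)
    (Θ : (Fin p → ℝ) → (Fin p → ℝ))
    (hΘ : ∀ y x : Fin p → ℝ, l0 x ≤ k → norm2 (Θ y - x) ≤ 1.62 * norm2 (y - x))
    (βstar βt : Fin p → ℝ) (hβstar : l0 βstar ≤ kstar) (hβt : l0 βt ≤ k)
    (S : Finset (Fin p)) (hS : S = suppF βt ∪ suppF βstar)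
    (βnext : Fin p → ℝ)
    (hβnext : βnext = Θ (βt - η • restr S (gradf βt)))
    (ρ : ℝ) (hρ : ρ = Real.sqrt (1 - 2 * η * ms + η ^ 2 * Ms ^ 2)) :
    norm2 (βnext - βstar)
        ≤ 1.62 * ρ * norm2 (βt - βstar)
          + 1.62 * η * Real.sqrt (s : ℝ) * normInf (gradf βstar) ∧
      ρ < 1 := by
  classical
  have hMs : 0 < Ms := lt_of_lt_of_le hms hmM
  have hMsη : η * Ms ^ 2 < 2 * ms := (lt_div_iff₀ (by positivity)).mp hη1
  have ha0 : 0 ≤ 1 - 2 * η * ms + η ^ 2 * Ms ^ 2 := by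
    nlinarith [sq_nonneg (1 - η * Ms), mul_nonneg hη0.le (sub_nonneg.mpr hmM)]
  have hρ1 : ρ < 1 := by
    calc ρ = Real.sqrt (1 - 2 * η * ms + η ^ 2 * Ms ^ 2) := hρ
      _ < Real.sqrt 1 :=
          Real.sqrt_lt_sqrt ha0 (by nlinarith [mul_lt_mul_of_pos_left hMsη hη0])
      _ = 1 := Real.sqrt_one
  have hρ0 : 0 ≤ ρ := hρ ▸ Real.sqrt_nonneg _
  have hρsq : ρ ^ 2 = 1 - 2 * η * ms + η ^ 2 * Ms ^ 2 := by
    rw [hρ]; exact Real.sq_sqrt ha0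
  refine ⟨?_, hρ1⟩
  -- cardinality of S
  have hcard : S.card ≤ s := by
    rw [hS, hs]
    refine le_trans (Finset.card_union_le _ _) ?_
    have h1 : (suppF βt).card ≤ k := hβt
    have h2 : (suppF βstar).card ≤ kstar := hβstar
    omega
  have hsupp : ∀ v : Fin p → ℝ, (∀ i, i ∉ S → v i = 0) → l0 v ≤ s := by
    intro v hv
    have hsub : (Finset.univ.filter fun i => v i ≠ 0) ⊆ S := by
      intro i hi
      rw [Finset.mem_filter] at hi
      by_contra h
      exact hi.2 (hv i h)
    calc l0 v = (Finset.univ.filter fun i => v i ≠ 0).card := rfl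
      _ ≤ S.card := Finset.card_le_card hsub
      _ ≤ s := hcard
  have hβt0 : ∀ i, i ∉ S → βt i = 0 := by
    intro i hi
    rw [hS, Finset.mem_union] at hi
    push_neg at hi
    have h1 := hi.1
    simp only [suppF, Finset.mem_filter, Finset.mem_univ, true_and, not_not] at h1
    exact h1
  have hβs0 : ∀ i, i ∉ S → βstar i = 0 := by
    intro i hi
    rw [hS, Finset.mem_union] at hi
    push_neg at hi
    have h1 := hi.2
    simp only [suppF, Finset.mem_filter, Finset.mem_univ, true_and, not_not] at h1
    exact h1
  set u : Fin p → ℝ := restr S (gradf βt - gradf βstar) with hu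
  set w : Fin p → ℝ := βt - Ms⁻¹ • u with hw
  have hu0 : ∀ i, i ∉ S → u i = 0 := by
    intro i hi; simp [hu, restr, hi]
  -- l0 bounds
  have hl0Δ : l0 (βt - βstar) ≤ s :=
    hsupp _ fun i hi => by simp [Pi.sub_apply, hβt0 i hi, hβs0 i hi]
  have hl0Δ' : l0 (βstar - βt) ≤ s :=
    hsupp _ fun i hi => by simp [Pi.sub_apply, hβt0 i hi, hβs0 i hi]
  have hl0w1 : l0 (w - βt) ≤ s :=
    hsupp _ fun i hi => by simp [hw, Pi.sub_apply, Pi.smul_apply, hu0 i hi]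
  have hl0w2 : l0 (w - βstar) ≤ s :=
    hsupp _ fun i hi => by
      simp [hw, Pi.sub_apply, Pi.smul_apply, hu0 i hi, hβt0 i hi, hβs0 i hi]
  -- inner-product identities
  have hipdu : ip (gradf βt - gradf βstar) u = norm2 u ^ 2 := by
    rw [norm2_sq]
    refine Finset.sum_congr rfl fun i _ => ?_
    by_cases h : i ∈ S <;> simp [hu, restr, h, sq]
  have hipΔu : ip (βt - βstar) u = ip (βt - βstar) (gradf βt - gradf βstar) := by
    refine Finset.sum_congr rfl fun i _ => ?_
    by_cases h : i ∈ S
    · simp [hu, restr, h]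
    · simp [hβt0 i h, hβs0 i h, Pi.sub_apply]
  -- strong monotonicity
  have hmono : ms * norm2 (βt - βstar) ^ 2
      ≤ ip (gradf βt) (βt - βstar) - ip (gradf βstar) (βt - βstar) := by
    have e1 := (hrsc βt βstar hl0Δ).1
    have e2 := (hrsc βstar βt hl0Δ').1
    rw [norm2_sub_comm βstar βt,
      show βstar - βt = -(βt - βstar) from (neg_sub _ _).symm, ip_neg_right] at e2
    linarith
  -- smoothness upper bound
  have hsm := (hrsc βt βstar hl0Δ).2
  -- gradient bound
  have hw_bt : w - βt = (-(Ms⁻¹)) • u := by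
    funext i
    simp [hw, Pi.sub_apply, Pi.smul_apply, smul_eq_mul]
  have hw_bs : w - βstar = (βt - βstar) - Ms⁻¹ • u := by
    funext i
    simp [hw, Pi.sub_apply, Pi.smul_apply, smul_eq_mul]
    ring
  have hgrad : norm2 u ^ 2 ≤ Ms ^ 2 * norm2 (βt - βstar) ^ 2 := by
    have hw1 := (hrsc w βt hl0w1).2
    have hw2 := (hrsc w βstar hl0w2).1
    rw [hw_bt, ip_smul_right, norm2_smul, abs_neg, abs_inv, abs_of_pos hMs, mul_pow] at hw1
    rw [hw_bs, ip_sub_right, ip_smul_right] at hw2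
    have hw2nn : (0:ℝ) ≤ ms / 2 * norm2 ((βt - βstar) - Ms⁻¹ • u) ^ 2 := by positivity
    have hN : ip (gradf βt) u - ip (gradf βstar) u = norm2 u ^ 2 := by
      rw [← ip_sub_left]; exact hipdu
    have hN' : Ms⁻¹ * (ip (gradf βt) u - ip (gradf βstar) u) = Ms⁻¹ * norm2 u ^ 2 := by
      rw [hN]
    have hchain : Ms⁻¹ * norm2 u ^ 2
        ≤ Ms / 2 * norm2 (βt - βstar) ^ 2 + Ms / 2 * (Ms⁻¹ ^ 2 * norm2 u ^ 2) := by
      linarith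
    have h3 := mul_le_mul_of_nonneg_left hchain (by positivity : (0:ℝ) ≤ 2 * Ms)
    have hMsne : Ms ≠ 0 := ne_of_gt hMs
    have h4 : 2 * Ms * (Ms⁻¹ * norm2 u ^ 2) = 2 * norm2 u ^ 2 := by
      field_simp
    have h5 : 2 * Ms * (Ms / 2 * norm2 (βt - βstar) ^ 2 + Ms / 2 * (Ms⁻¹ ^ 2 * norm2 u ^ 2))
        = Ms ^ 2 * norm2 (βt - βstar) ^ 2 + norm2 u ^ 2 := by
      field_simp
    rw [h4, h5] at h3
    linarith
  -- contraction of the gradient step restricted to S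
  have hmono' : ms * norm2 (βt - βstar) ^ 2 ≤ ip (βt - βstar) u := by
    rw [hipΔu, ip_comm, ip_sub_left]
    exact hmono
  have hcontr : norm2 ((βt - βstar) - η • u) ^ 2 ≤ ρ ^ 2 * norm2 (βt - βstar) ^ 2 := by
    rw [norm2_eq, e_sub, e_smul, norm_sub_sq_real, real_inner_smul_right, norm_smul,
      ← norm2_eq, ← norm2_eq, ← ip_eq, Real.norm_eq_abs, abs_of_pos hη0, mul_pow, hρsq]
    nlinarith [mul_le_mul_of_nonneg_left hmono' hη0.le,
      mul_le_mul_of_nonneg_left hgrad (sq_nonneg η)]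
  have hcontr' : norm2 ((βt - βstar) - η • u) ≤ ρ * norm2 (βt - βstar) := by
    have h := Real.sqrt_le_sqrt hcontr
    rwa [Real.sqrt_sq (norm2_nonneg _), Real.sqrt_mul (sq_nonneg ρ),
      Real.sqrt_sq hρ0, Real.sqrt_sq (norm2_nonneg _)] at h
  -- decomposition
  have hdecomp : βt - η • restr S (gradf βt) - βstar
      = ((βt - βstar) - η • u) + (-η) • restr S (gradf βstar) := by
    funext i
    by_cases h : i ∈ S <;>
      simp [hu, restr, h, Pi.sub_apply, Pi.add_apply, Pi.smul_apply, smul_eq_mul] <;> ring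
  have hfinal : norm2 (βt - η • restr S (gradf βt) - βstar)
      ≤ ρ * norm2 (βt - βstar) + η * Real.sqrt (s : ℝ) * normInf (gradf βstar) := by
    rw [hdecomp]
    refine le_trans (norm2_add_le _ _) ?_
    have h2 : norm2 ((-η) • restr S (gradf βstar))
        ≤ η * Real.sqrt (s : ℝ) * normInf (gradf βstar) := by
      rw [norm2_smul, abs_neg, abs_of_pos hη0]
      have h3 := norm2_restr_le hp S (gradf βstar)
      have h4 : Real.sqrt (S.card : ℝ) ≤ Real.sqrt (s : ℝ) :=
        Real.sqrt_le_sqrt (by exact_mod_cast hcard)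
      have h5 := normInf_nonneg hp (gradf βstar)
      calc η * norm2 (restr S (gradf βstar))
          ≤ η * (Real.sqrt (S.card : ℝ) * normInf (gradf βstar)) :=
            mul_le_mul_of_nonneg_left h3 hη0.le
        _ ≤ η * (Real.sqrt (s : ℝ) * normInf (gradf βstar)) :=
            mul_le_mul_of_nonneg_left (mul_le_mul_of_nonneg_right h4 h5) hη0.le
        _ = η * Real.sqrt (s : ℝ) * normInf (gradf βstar) := by ring
    linarith
  rw [hβnext]
  calc norm2 (Θ (βt - η • restr S (gradf βt)) - βstar)
      ≤ 1.62 * norm2 (βt - η • restr S (gradf βt) - βstar) :=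
        hΘ _ _ (le_trans hβstar hks)
    _ ≤ 1.62 * (ρ * norm2 (βt - βstar) + η * Real.sqrt (s : ℝ) * normInf (gradf βstar)) :=
        mul_le_mul_of_nonneg_left hfinal (by norm_num)
    _ = 1.62 * ρ * norm2 (βt - βstar)
        + 1.62 * η * Real.sqrt (s : ℝ) * normInf (gradf βstar) := by ring
end
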